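/- Let n ≥ 2 and let p_1,…,p_n and q_1,…,q_n be natural numbers. Let D = 2·I_n be the n×n diagonal matrix with all diagonal entries 2, and let F be the n×n integer matrix with F_{ii} = 2^{p_i}, F_{i,i+1} = −2^{q_i} for 1 ≤ i ≤ n−1, F_{n,1} = +2^{q_n}, and all other entries 0. Then the ℤ-submodule of ℤⁿ spanned by the rows of the 2n×n matrix obtained by stacking D on top of F equals all of ℤⁿ if and only if exactly one of the two sums p_1 + ⋯ + p_n and q_1 + ⋯ + q_n equals 0. -/

import Mathlib

/-- The matrix `F` with `F_{ii} = 2^{p_i}`, `F_{i,i+1} = −2^{q_i}` for `1 ≤ i ≤ n−1`,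
`F_{n,1} = +2^{q_n}`, and all other entries `0` (indices shifted down by one). -/
def echinusF (n : ℕ) (p q : Fin n → ℕ) : Matrix (Fin n) (Fin n) ℤ :=
  Matrix.of fun i j =>
    if i = j then (2 : ℤ) ^ p i
    else if (i : ℕ) + 1 = (j : ℕ) then -(2 : ℤ) ^ q i
    else if (i : ℕ) = n - 1 ∧ (j : ℕ) = 0 then (2 : ℤ) ^ q i
    else 0

lemma echinusF_det (m : ℕ) (p q : Fin (m + 2) → ℕ) :
    (echinusF (m + 2) p q).det = 2 ^ (∑ i, p i) + 2 ^ (∑ i, q i) := by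
  rw [Matrix.det_succ_column_zero (echinusF (m+2) p q)]
  rw [Fintype.sum_eq_add (0 : Fin (m + 2)) (Fin.last (m + 1))
    (by simp [Fin.ext_iff])
    (fun x hx => by
      have hx0 : (x : ℕ) ≠ 0 := fun h => hx.1 (Fin.ext h)
      have hxl : (x : ℕ) ≠ m + 1 := fun h => hx.2 (Fin.ext h)
      have h1 : echinusF (m+2) p q x 0 = 0 := by
        simp only [echinusF, Matrix.of_apply, Fin.ext_iff, Fin.val_zero]
        split_ifs with h1 h2 h3 <;> first | rfl | (exfalso; omega) | (exfalso; simp_all <;> omega)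
      simp [h1])]
  have h00 : echinusF (m+2) p q 0 0 = 2 ^ p 0 := by simp [echinusF]
  have hl0 : echinusF (m+2) p q (Fin.last (m + 1)) 0 = 2 ^ q (Fin.last (m + 1)) := by
    simp only [echinusF, Matrix.of_apply, Fin.ext_iff, Fin.val_zero, Fin.val_last]
    split_ifs with h1 h2 h3 <;> first | rfl | (exfalso; omega) | (exfalso; simp_all <;> omega)
  have hminor0 : ((echinusF (m+2) p q).submatrix (Fin.succAbove 0) Fin.succ).det
      = ∏ i : Fin (m + 1), (2 : ℤ) ^ p i.succ := by
    rw [Fin.succAbove_zero]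
    rw [Matrix.det_of_upperTriangular (M := (echinusF (m+2) p q).submatrix Fin.succ Fin.succ)
      (by
        intro i j hij
        have hij' : (j : ℕ) < (i : ℕ) := hij
        simp only [Matrix.submatrix_apply, echinusF, Matrix.of_apply, Fin.ext_iff,
          Fin.val_succ]
        split_ifs with h1 h2 h3 <;> first | rfl | (exfalso; omega) | (exfalso; simp_all <;> omega))]
    refine Finset.prod_congr rfl fun i _ => ?_
    simp [echinusF]
  have hminorl : ((echinusF (m+2) p q).submatrix (Fin.last (m + 1)).succAbove Fin.succ).det
      = ∏ i : Fin (m + 1), (-(2 : ℤ) ^ q i.castSucc) := by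
    rw [Fin.succAbove_last]
    rw [Matrix.det_of_lowerTriangular ((echinusF (m+2) p q).submatrix Fin.castSucc Fin.succ)
      (by
        intro i j hij
        have hij' : (i : ℕ) < (j : ℕ) := hij
        have hi : (i : ℕ) < m + 1 := i.isLt
        simp only [Matrix.submatrix_apply, echinusF, Matrix.of_apply, Fin.ext_iff,
          Fin.val_succ, Fin.coe_castSucc]
        split_ifs with h1 h2 h3 <;> first | rfl | (exfalso; omega) | (exfalso; simp_all <;> omega))]
    refine Finset.prod_congr rfl fun i _ => ?_
    simp only [Matrix.submatrix_apply, echinusF, Matrix.of_apply, Fin.ext_iff,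
      Fin.val_succ, Fin.coe_castSucc]
    split_ifs with h1 h2 h3 <;> first | rfl | (exfalso; omega) | (exfalso; simp_all <;> omega)
  have hq : ∏ i : Fin (m+1), (-(2:ℤ) ^ q i.castSucc)
      = (-1)^(m+1) * 2 ^ (∑ i : Fin (m+1), q i.castSucc) := by
    simp_rw [neg_eq_neg_one_mul ((2:ℤ) ^ _)]
    rw [Finset.prod_mul_distrib, Finset.prod_const, Finset.card_univ, Fintype.card_fin,
      Finset.prod_pow_eq_pow_sum]
  rw [h00, hl0, hminor0, hminorl, hq]
  have hs : ((-1:ℤ))^(m+1) * ((-1:ℤ))^(m+1) = 1 := by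
    rw [← pow_add]; exact Even.neg_one_pow ⟨m+1, rfl⟩
  rw [Fin.sum_univ_succ p, Fin.sum_univ_castSucc q, pow_add, pow_add,
    Finset.prod_pow_eq_pow_sum]
  simp only [Fin.val_zero, Fin.val_last, pow_zero, one_mul]
  linear_combination (2:ℤ)^(q (Fin.last (m+1))) * 2^(∑ i : Fin (m+1), q i.castSucc) * hs

lemma span_rows_eq_top_iff_odd_det (n : ℕ) (M : Matrix (Fin n) (Fin n) ℤ) :
    Submodule.span ℤ (Set.range fun i =>
        Matrix.fromRows (Matrix.diagonal fun _ => (2 : ℤ)) M i) = ⊤ ↔ Odd M.det := by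
  constructor
  · intro htop
    by_contra hodd
    rw [Int.not_odd_iff_even] at hodd
    -- build nonzero kernel vector mod 2
    have hdet0 : (M.map (Int.cast : ℤ → ZMod 2)).det = 0 := by
      have : ((Int.castRingHom (ZMod 2)).mapMatrix M).det = ((M.det : ℤ) : ZMod 2) :=
        (RingHom.map_det (Int.castRingHom (ZMod 2)) M).symm
      have h2 : ((M.det : ℤ) : ZMod 2) = 0 := by
        obtain ⟨k, hk⟩ := hodd
        rw [hk]; push_cast; ring_nf
        simp [show ((2:ZMod 2)) = 0 from rfl, two_mul]
      rw [← h2]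
      exact this
    obtain ⟨v, hv0, hvM⟩ := Matrix.exists_mulVec_eq_zero_iff.mpr hdet0
    set φ : (Fin n → ℤ) →ₗ[ℤ] ZMod 2 :=
      { toFun := fun x => ∑ j, (x j : ZMod 2) * v j
        map_add' := by intro a b; simp [add_mul, Finset.sum_add_distrib]
        map_smul' := by
          intro z a
          simp only [Pi.smul_apply, smul_eq_mul, Int.cast_mul, RingHom.id_apply,
            zsmul_eq_mul, Finset.mul_sum, mul_assoc] } with hφ
    have hker : ∀ i, φ (Matrix.fromRows (Matrix.diagonal fun _ => (2 : ℤ)) M i) = 0 := by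
      rintro (i | i)
      · simp only [hφ, LinearMap.coe_mk, AddHom.coe_mk, Matrix.fromRows_apply_inl]
        rw [Finset.sum_eq_single i]
        · simp only [Matrix.fromRows_apply_inl, Matrix.diagonal_apply_eq, Int.cast_ofNat]
          exact mul_eq_zero.mpr (Or.inl (by decide))
        · intro b _ hb
          simp [Matrix.diagonal_apply_ne _ (Ne.symm hb)]
        · simp
      · have := congrFun hvM i
        simp only [Matrix.mulVec, dotProduct, Pi.zero_apply] at this
        simpa [hφ, Matrix.map_apply] using this
    have hle : Submodule.span ℤ (Set.range fun i =>
        Matrix.fromRows (Matrix.diagonal fun _ => (2 : ℤ)) M i) ≤ LinearMap.ker φ := by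
      rw [Submodule.span_le]
      rintro x ⟨i, rfl⟩
      exact hker i
    rw [htop, top_le_iff] at hle
    apply hv0
    funext j
    have : φ (Pi.single j 1) = 0 := by
      have := LinearMap.congr_fun (LinearMap.ker_eq_top.mp hle) (Pi.single j 1)
      simpa using this
    simp only [hφ, LinearMap.coe_mk, AddHom.coe_mk] at this
    rw [Finset.sum_eq_single j] at this
    · simpa using this
    · intro b _ hb; simp [Pi.single_eq_of_ne hb]
    · simp
  · intro hodd
    obtain ⟨k, hk⟩ := hodd
    rw [eq_top_iff, ← (Pi.basisFun ℤ (Fin n)).span_eq, Submodule.span_le]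
    rintro x ⟨j, rfl⟩
    set S := Submodule.span ℤ (Set.range fun i =>
        Matrix.fromRows (Matrix.diagonal fun _ => (2 : ℤ)) M i) with hS
    have hrow : ∀ i, Matrix.fromRows (Matrix.diagonal fun _ => (2 : ℤ)) M i ∈ S :=
      fun i => Submodule.subset_span ⟨i, rfl⟩
    have hD : (2 : ℤ) • Pi.single j (1:ℤ) ∈ S := by
      have := hrow (Sum.inl j)
      convert this using 1
      funext k
      simp [Matrix.fromRows_apply_inl, Matrix.diagonal_apply, Pi.single_apply, eq_comm]
    have hdetE : M.det • Pi.single j (1:ℤ) ∈ S := by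
      have heq : M.det • Pi.single j (1:ℤ) = ∑ i, M.adjugate j i • M i := by
        funext c
        have := congrFun (congrFun (Matrix.adjugate_mul M) j) c
        simp only [Matrix.mul_apply, Matrix.smul_apply, Matrix.one_apply] at this
        simp only [Pi.smul_apply, Pi.single_apply, Finset.sum_apply, smul_eq_mul]
        rw [this]
        by_cases h : j = c <;> simp [h, eq_comm]
      rw [heq]
      exact Submodule.sum_smul_mem S _ (fun i _ => hrow (Sum.inr i))
    simp only [Pi.basisFun_apply]
    have : (Pi.single j (1:ℤ) : Fin n → ℤ) = M.det • Pi.single j (1:ℤ) - k • ((2:ℤ) • Pi.single j (1:ℤ)) := by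
      rw [smul_smul, ← sub_smul, hk]; ring_nf
    rw [this]
    exact Submodule.sub_mem S hdetE (Submodule.smul_mem S k hD)

lemma odd_two_pow_add_two_pow (a b : ℕ) :
    Odd ((2:ℤ) ^ a + 2 ^ b) ↔ ((a = 0 ∧ b ≠ 0) ∨ (a ≠ 0 ∧ b = 0)) := by
  rw [Int.odd_add]
  have ha : Odd ((2:ℤ)^a) ↔ a = 0 := by
    rw [← Int.not_even_iff_odd, Int.even_pow]; simp
  have hb : Even ((2:ℤ)^b) ↔ b ≠ 0 := by
    rw [Int.even_pow]; simp
  rw [ha, hb]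
  constructor
  · intro h
    by_cases h0 : a = 0
    · exact Or.inl ⟨h0, h.mp h0⟩
    · right
      refine ⟨h0, ?_⟩
      by_contra hb0
      exact h0 (h.mpr hb0)
  · rintro (⟨h1, h2⟩ | ⟨h1, h2⟩) <;> constructor <;> intro <;> tauto

theorem stmt15 (n : ℕ) (hn : 2 ≤ n) (p q : Fin n → ℕ) :
    Submodule.span ℤ (Set.range fun i =>
        Matrix.fromRows (Matrix.diagonal fun _ => (2 : ℤ)) (echinusF n p q) i) = ⊤ ↔
      ((∑ i, p i = 0 ∧ ∑ i, q i ≠ 0) ∨ (∑ i, p i ≠ 0 ∧ ∑ i, q i = 0)) := by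
  obtain ⟨m, rfl⟩ : ∃ m, n = m + 2 := ⟨n - 2, by omega⟩
  rw [span_rows_eq_top_iff_odd_det, echinusF_det, odd_two_pow_add_two_pow]
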